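/- With f and g defined as the constrained and unconstrained (m+1)-level chain sums respectively, for all i ∈ {0,...,N−1} and m ∈ {1,...,h−1}: f(i,m) = (1 + Σ_{r=0}^{m−1} s'_r·t^r)·d^{(N)}(i, i·t + s'_m) + t^m·Σ_{s=0}^{s'_m−1} d^{(N)}(i, i·t + s) + f((i·t + s'_m) mod N, m−1) + Σ_{s=0}^{s'_m−1} g((i·t + s) mod N, m−1). -/

import Mathlib

/-- The mod-`N` extension of a metric `d` on `{0,...,N-1}`. -/
def dmod (d : ℕ → ℕ → ℝ) (N x y : ℕ) : ℝ := d (x % N) (y % N)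

/-- The `r`-th digit of `j` in base `t`. -/
def digit (t j r : ℕ) : ℕ := j / t ^ r % t

/-- The pseudo-distance `d̂(i, i·t^h + j mod N)`, defined as the length of the
`t`-ary chain from `i` to `i·t^h + j` determined by the base-`t` digits of `j`. -/
def hatd (d : ℕ → ℕ → ℝ) (N t h i j : ℕ) : ℝ :=
  ∑ k ∈ Finset.range h,
    dmod d N
      (i * t ^ k + ∑ ℓ ∈ Finset.range k, digit t j (h - 1 - ℓ) * t ^ (k - 1 - ℓ))
      (i * t ^ (k + 1) + ∑ ℓ ∈ Finset.range (k + 1), digit t j (h - 1 - ℓ) * t ^ (k - ℓ))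

/-- Extend a digit tuple `s : Fin m → Fin t` to a function `ℕ → ℕ` (zero beyond `m`). -/
def extF {t : ℕ} (m : ℕ) (s : Fin m → Fin t) : ℕ → ℕ :=
  fun ℓ => if hℓ : ℓ < m then (s ⟨ℓ, hℓ⟩ : ℕ) else 0

/-- The `(m+1)`-level chain sum
`Σ_{k=0}^{m} D(i·t^k + Σ_{ℓ=0}^{k−1} s_{m−ℓ}·t^{k−1−ℓ}, i·t^{k+1} + Σ_{ℓ=0}^{k} s_{m−ℓ}·t^{k−ℓ})`
for a digit assignment `s` (here `D` plays the role of `d^{(N)}`). -/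
def chainTerm (D : ℕ → ℕ → ℝ) (t i m : ℕ) (s : ℕ → ℕ) : ℝ :=
  ∑ k ∈ Finset.range (m + 1),
    D (i * t ^ k + ∑ ℓ ∈ Finset.range k, s (m - ℓ) * t ^ (k - 1 - ℓ))
      (i * t ^ (k + 1) + ∑ ℓ ∈ Finset.range (k + 1), s (m - ℓ) * t ^ (k - ℓ))

/-- `f(i,m)`: the chain sum over all digit tuples `(s_m,...,s_0) ∈ {0,...,t−1}^{m+1}`
whose value `Σ_r s_r·t^r` does not exceed `Σ_r s'_r·t^r`. -/
def fsum (D : ℕ → ℕ → ℝ) (t i m : ℕ) (s' : ℕ → ℕ) : ℝ :=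
  ∑ s : Fin (m + 1) → Fin t,
    if ∑ r ∈ Finset.range (m + 1), extF (m + 1) s r * t ^ r ≤
        ∑ r ∈ Finset.range (m + 1), s' r * t ^ r then
      chainTerm D t i m (extF (m + 1) s)
    else 0

/-- `g(i,m)`: the chain sum over all digit tuples `(s_m,...,s_0) ∈ {0,...,t−1}^{m+1}`. -/
def gsum (D : ℕ → ℕ → ℝ) (t i m : ℕ) : ℝ :=
  ∑ s : Fin (m + 1) → Fin t, chainTerm D t i m (extF (m + 1) s)

/- ### Auxiliary lemmas -/

lemma digit_lt {t : ℕ} (ht : 0 < t) (j r : ℕ) : digit t j r < t := Nat.mod_lt _ ht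

lemma sum_lt_pow {t : ℕ} (ht : 0 < t) (s : ℕ → ℕ) (m : ℕ) (hs : ∀ r < m, s r < t) :
    ∑ r ∈ Finset.range m, s r * t ^ r < t ^ m := by
  induction m with
  | zero => simpa using Nat.one_pos
  | succ M ih =>
    have h1 : ∑ r ∈ Finset.range M, s r * t ^ r < t ^ M := ih (fun r hr => hs r (by omega))
    have h2 : s M ≤ t - 1 := by have := hs M (by omega); omega
    have h3 : s M * t ^ M ≤ (t - 1) * t ^ M := Nat.mul_le_mul_right _ h2
    have key : t ^ M + (t - 1) * t ^ M = t ^ (M + 1) := by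
      have h1t : 1 + (t - 1) = t := by omega
      calc t ^ M + (t - 1) * t ^ M = (1 + (t - 1)) * t ^ M := by ring
        _ = t ^ (M + 1) := by rw [h1t, pow_succ]; ring
    rw [Finset.sum_range_succ]
    omega

lemma digit_sum {t : ℕ} (ht : 0 < t) (m : ℕ) (s : ℕ → ℕ) (hs : ∀ r < m, s r < t)
    {r : ℕ} (hr : r < m) :
    digit t (∑ ℓ ∈ Finset.range m, s ℓ * t ^ ℓ) r = s r := by
  have h0 : (∑ ℓ ∈ Finset.range (r+1), s ℓ * t ^ ℓ) + ∑ ℓ ∈ Finset.Ico (r+1) m, s ℓ * t ^ ℓ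
      = ∑ ℓ ∈ Finset.range m, s ℓ * t ^ ℓ := Finset.sum_range_add_sum_Ico _ hr
  have h1 : ∑ ℓ ∈ Finset.Ico (r+1) m, s ℓ * t ^ ℓ
      = (∑ ℓ ∈ Finset.range (m - (r+1)), s (r+1+ℓ) * t ^ ℓ) * t * t ^ r := by
    rw [Finset.sum_Ico_eq_sum_range, Finset.sum_mul, Finset.sum_mul]
    refine Finset.sum_congr rfl fun ℓ _ => ?_
    rw [pow_add, pow_succ]; ring
  set A := ∑ ℓ ∈ Finset.range r, s ℓ * t ^ ℓ with hAdef
  set B := ∑ ℓ ∈ Finset.range (m - (r+1)), s (r+1+ℓ) * t ^ ℓ with hBdef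
  have hA : A < t ^ r := sum_lt_pow ht s r (fun ℓ hℓ => hs ℓ (by omega))
  have h2 : ∑ ℓ ∈ Finset.range m, s ℓ * t ^ ℓ = A + (s r + B * t) * t ^ r := by
    rw [← h0, Finset.sum_range_succ, h1]; ring
  rw [h2]
  unfold digit
  rw [Nat.add_mul_div_right _ _ (pow_pos ht r), Nat.div_eq_of_lt hA, zero_add,
    Nat.add_mul_mod_self_right, Nat.mod_eq_of_lt (hs r hr)]

lemma sum_digit_mod (t x : ℕ) (m : ℕ) :
    ∑ r ∈ Finset.range m, digit t x r * t ^ r = x % t ^ m := by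
  induction m with
  | zero => simp [Nat.mod_one]
  | succ M ih =>
    have hdiv : x % t ^ (M+1) / t ^ M = x / t ^ M % t := by
      rw [pow_succ]; exact Nat.mod_mul_right_div_self x (t ^ M) t
    have hmod : x % t ^ (M+1) % t ^ M = x % t ^ M :=
      Nat.mod_mod_of_dvd x (pow_dvd_pow t (Nat.le_succ M))
    have hdm := Nat.div_add_mod (x % t ^ (M+1)) (t ^ M)
    rw [Finset.sum_range_succ, ih]
    unfold digit
    rw [← hdm, hdiv, hmod]; ring

lemma digit_lower {t : ℕ} (ht : 0 < t) {m r : ℕ} (hr : r < m) (a j : ℕ) :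
    digit t (a * t ^ m + j) r = digit t j r := by
  unfold digit
  have hpow : t ^ (m - (r+1)) * t * t ^ r = t ^ m := by
    rw [← pow_succ, ← pow_add]; congr 1; omega
  have h2 : a * t ^ m + j = j + a * t ^ (m - (r+1)) * t * t ^ r := by
    rw [← hpow]; ring
  rw [h2, Nat.add_mul_div_right _ _ (pow_pos ht r), Nat.add_mul_mod_self_right]

lemma digit_top {t : ℕ} (ht : 0 < t) {m a j : ℕ} (ha : a < t) (hj : j < t ^ m) :
    digit t (a * t ^ m + j) m = a := by
  unfold digit
  rw [add_comm, Nat.add_mul_div_right _ _ (pow_pos ht m), Nat.div_eq_of_lt hj, zero_add,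
    Nat.mod_eq_of_lt ha]

lemma chainTerm_congr (D : ℕ → ℕ → ℝ) (t i m : ℕ) {s1 s2 : ℕ → ℕ}
    (hs : ∀ r ≤ m, s1 r = s2 r) :
    chainTerm D t i m s1 = chainTerm D t i m s2 := by
  unfold chainTerm
  refine Finset.sum_congr rfl fun k _ => ?_
  have e1 : (∑ ℓ ∈ Finset.range k, s1 (m - ℓ) * t ^ (k - 1 - ℓ))
      = ∑ ℓ ∈ Finset.range k, s2 (m - ℓ) * t ^ (k - 1 - ℓ) :=
    Finset.sum_congr rfl fun ℓ _ => by rw [hs _ (Nat.sub_le _ _)]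
  have e2 : (∑ ℓ ∈ Finset.range (k+1), s1 (m - ℓ) * t ^ (k - ℓ))
      = ∑ ℓ ∈ Finset.range (k+1), s2 (m - ℓ) * t ^ (k - ℓ) :=
    Finset.sum_congr rfl fun ℓ _ => by rw [hs _ (Nat.sub_le _ _)]
  rw [e1, e2]

lemma dmod_congr (d : ℕ → ℕ → ℝ) (N : ℕ) {x y x' y' : ℕ}
    (hx : x % N = x' % N) (hy : y % N = y' % N) : dmod d N x y = dmod d N x' y' := by
  unfold dmod; rw [hx, hy]

lemma chain_split (d : ℕ → ℕ → ℝ) (N t i m : ℕ) (s : ℕ → ℕ) :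
    chainTerm (dmod d N) t i (m+1) s
      = dmod d N i (i * t + s (m+1))
        + chainTerm (dmod d N) t ((i * t + s (m+1)) % N) m s := by
  have key : ∀ k : ℕ,
      (i * t ^ (k+1) + ∑ ℓ ∈ Finset.range (k+1), s (m+1-ℓ) * t ^ (k-ℓ)) % N
        = (((i * t + s (m+1)) % N) * t ^ k + ∑ ℓ ∈ Finset.range k, s (m-ℓ) * t ^ (k-1-ℓ)) % N := by
    intro k
    rw [Finset.sum_range_succ']
    have e : ∀ ℓ, s (m+1-(ℓ+1)) * t ^ (k-(ℓ+1)) = s (m-ℓ) * t ^ (k-1-ℓ) := by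
      intro ℓ
      have h1 : m+1-(ℓ+1) = m-ℓ := by omega
      have h2 : k-(ℓ+1) = k-1-ℓ := by omega
      rw [h1, h2]
    simp only [e, Nat.sub_zero]
    have h3 : i * t ^ (k+1) + ((∑ ℓ ∈ Finset.range k, s (m-ℓ) * t ^ (k-1-ℓ)) + s (m+1) * t ^ k)
        = (i * t + s (m+1)) * t ^ k + ∑ ℓ ∈ Finset.range k, s (m-ℓ) * t ^ (k-1-ℓ) := by
      rw [pow_succ]; ring
    rw [h3]
    exact (((Nat.mod_modEq (i * t + s (m+1)) N).mul_right (t ^ k)).add_right _).symm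
  unfold chainTerm
  rw [Finset.sum_range_succ']
  have h0 : (i * t ^ 0 + ∑ ℓ ∈ Finset.range 0, s (m+1-ℓ) * t ^ (0-1-ℓ)) = i := by simp
  have h1 : (i * t ^ (0+1) + ∑ ℓ ∈ Finset.range (0+1), s (m+1-ℓ) * t ^ (0-ℓ)) = i * t + s (m+1) := by
    simp
  rw [h0, h1, add_comm]
  congr 1
  refine Finset.sum_congr rfl fun k _ => ?_
  refine dmod_congr d N ?_ ?_
  · have := key k
    simpa using this
  · have := key (k+1)
    simpa [Nat.add_sub_cancel] using this

lemma extF_lt {t : ℕ} (ht : 0 < t) (m : ℕ) (s : Fin m → Fin t) :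
    ∀ r < m, extF m s r < t := by
  intro r hr; unfold extF; rw [dif_pos hr]; exact (s ⟨r, hr⟩).isLt

lemma sum_ext {t : ℕ} (ht : 0 < t) (m : ℕ) (F : (ℕ → ℕ) → ℝ)
    (hF : ∀ s1 s2 : ℕ → ℕ, (∀ r < m, s1 r = s2 r) → F s1 = F s2) :
    ∑ s : Fin m → Fin t, F (extF m s) = ∑ j ∈ Finset.range (t ^ m), F (digit t j) := by
  refine Finset.sum_bij'
    (i := fun (s : Fin m → Fin t) _ => ∑ r ∈ Finset.range m, extF m s r * t ^ r)
    (j := fun j _ => fun r : Fin m => (⟨digit t j r, digit_lt ht j r⟩ : Fin t))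
    ?_ ?_ ?_ ?_ ?_
  · intro s _
    exact Finset.mem_range.mpr (sum_lt_pow ht _ m (extF_lt ht m s))
  · intro j _; exact Finset.mem_univ _
  · intro s _
    funext r
    apply Fin.ext
    have := digit_sum ht m (extF m s) (extF_lt ht m s) r.isLt
    simp only [this]
    unfold extF
    rw [dif_pos r.isLt]
  · intro j hj
    have hj' := Finset.mem_range.mp hj
    show (∑ r ∈ Finset.range m,
        extF m (fun r : Fin m => (⟨digit t j r, digit_lt ht j r⟩ : Fin t)) r * t ^ r) = j
    have he : ∀ r ∈ Finset.range m,
        extF m (fun r : Fin m => (⟨digit t j r, digit_lt ht j r⟩ : Fin t)) r * t ^ r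
          = digit t j r * t ^ r := by
      intro r hr
      unfold extF
      rw [dif_pos (Finset.mem_range.mp hr)]
    rw [Finset.sum_congr rfl he, sum_digit_mod t j m, Nat.mod_eq_of_lt hj']
  · intro s _
    refine hF _ _ fun r hr => (digit_sum ht m (extF m s) (extF_lt ht m s) hr).symm

lemma sum_range_mul (G : ℕ → ℝ) (a b : ℕ) :
    ∑ j ∈ Finset.range (a * b), G j
      = ∑ x ∈ Finset.range a, ∑ y ∈ Finset.range b, G (x * b + y) := by
  induction a with
  | zero => simp
  | succ a ih =>
    have hsplit := Finset.sum_range_add_sum_Ico G (Nat.le_add_right (a * b) b)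
    have h2 : ∑ j ∈ Finset.Ico (a * b) (a * b + b), G j
        = ∑ y ∈ Finset.range b, G (a * b + y) := by
      rw [Finset.sum_Ico_eq_sum_range]
      simp
    rw [Finset.sum_range_succ, ← ih, Nat.succ_mul, ← hsplit, h2]

lemma sum_ite_le (K V : ℕ) (hVK : V < K) (c : ℝ) :
    ∑ y ∈ Finset.range K, (if y ≤ V then c else 0) = (V + 1 : ℕ) * c := by
  rw [← Finset.sum_filter]
  have hfil : (Finset.range K).filter (· ≤ V) = Finset.range (V + 1) := by
    ext z
    simp only [Finset.mem_filter, Finset.mem_range, Nat.lt_succ_iff]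
    omega
  rw [hfil, Finset.sum_const, Finset.card_range, nsmul_eq_mul]

/-- Lemma 8 (recurrence for `f`): for `i ∈ {0,...,N−1}` and `m ∈ {1,...,h−1}`,
`f(i,m) = (1 + Σ_{r<m} s'_r·t^r)·d^{(N)}(i, i·t+s'_m) + t^m·Σ_{s<s'_m} d^{(N)}(i, i·t+s)
 + f((i·t+s'_m) mod N, m−1) + Σ_{s<s'_m} g((i·t+s) mod N, m−1)`,
where `s'` is the `t`-ary representation of `N−1`. -/
theorem stmt_14 (n h t σ N : ℕ) (hn : 2 ≤ n) (hh : 2 ≤ h)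
    (ht : Nat.Prime t) (htl : ⌈(n : ℝ) ^ ((1 : ℝ) / h)⌉₊ ≤ t)
    (hσ : σ ≤ 1) (hNdef : N = n - σ)
    (d : ℕ → ℕ → ℝ)
    (hd0 : ∀ x < n, d x x = 0)
    (hdpos : ∀ x < n, ∀ y < n, x ≠ y → 0 < d x y)
    (hdsymm : ∀ x < n, ∀ y < n, d x y = d y x)
    (hdtri : ∀ x < n, ∀ y < n, ∀ z < n, d x z ≤ d x y + d y z) :
    ∀ i < N, ∀ m, 1 ≤ m → m ≤ h - 1 →
      fsum (dmod d N) t i m (digit t (N - 1)) =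
        ((1 + ∑ r ∈ Finset.range m, digit t (N - 1) r * t ^ r : ℕ) : ℝ) *
            dmod d N i (i * t + digit t (N - 1) m) +
          (t : ℝ) ^ m *
            ∑ s ∈ Finset.range (digit t (N - 1) m), dmod d N i (i * t + s) +
          fsum (dmod d N) t ((i * t + digit t (N - 1) m) % N) (m - 1) (digit t (N - 1)) +
          ∑ s ∈ Finset.range (digit t (N - 1) m),
            gsum (dmod d N) t ((i * t + s) % N) (m - 1) := by
  have ht0 : 0 < t := ht.pos
  intro i hi m hm1 hmh
  obtain ⟨M, rfl⟩ : ∃ M, m = M + 1 := ⟨m - 1, by omega⟩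
  simp only [Nat.add_sub_cancel]
  set c := digit t (N - 1) with hc
  set T := t ^ (M + 1) with hT
  set A := c (M + 1) with hA
  have hAt : A < t := digit_lt ht0 _ _
  set V : ℕ := ∑ r ∈ Finset.range (M + 1), c r * t ^ r with hV
  have hVT : V < T := by
    rw [hV, hT]; exact sum_lt_pow ht0 c (M + 1) (fun r _ => digit_lt ht0 _ _)
  have hchaincong : ∀ (p : ℕ) (s1 s2 : ℕ → ℕ), (∀ r < M + 1, s1 r = s2 r) →
      chainTerm (dmod d N) t p M s1 = chainTerm (dmod d N) t p M s2 :=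
    fun p s1 s2 hss => chainTerm_congr (dmod d N) t p M (fun r hr => hss r (by omega))
  -- description of fsum at level M
  have hf : ∀ p, fsum (dmod d N) t p M c
      = ∑ j ∈ Finset.range T,
          (if j ≤ V then chainTerm (dmod d N) t p M (digit t j) else 0) := by
    intro p
    have h1 := sum_ext (t := t) ht0 (M + 1)
      (fun sf => if (∑ r ∈ Finset.range (M + 1), sf r * t ^ r) ≤ V
        then chainTerm (dmod d N) t p M sf else 0)
      (by
        intro s1 s2 hss
        have e : (∑ r ∈ Finset.range (M+1), s1 r * t ^ r)
            = ∑ r ∈ Finset.range (M+1), s2 r * t ^ r :=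
          Finset.sum_congr rfl fun r hr => by rw [hss r (Finset.mem_range.mp hr)]
        simp only [e, hchaincong p s1 s2 hss])
    have h2 : fsum (dmod d N) t p M c
        = ∑ s : Fin (M+1) → Fin t,
            (fun sf => if (∑ r ∈ Finset.range (M + 1), sf r * t ^ r) ≤ V
              then chainTerm (dmod d N) t p M sf else 0) (extF (M+1) s) := rfl
    rw [h2, h1, hT]
    refine Finset.sum_congr rfl fun j hj => ?_
    rw [sum_digit_mod t j (M+1), Nat.mod_eq_of_lt (Finset.mem_range.mp hj)]
  -- description of gsum at level M
  have hg : ∀ p, gsum (dmod d N) t p M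
      = ∑ j ∈ Finset.range T, chainTerm (dmod d N) t p M (digit t j) := by
    intro p
    have h1 := sum_ext (t := t) ht0 (M + 1)
      (fun sf => chainTerm (dmod d N) t p M sf) (hchaincong p)
    have h2 : gsum (dmod d N) t p M
        = ∑ s : Fin (M+1) → Fin t,
            (fun sf => chainTerm (dmod d N) t p M sf) (extF (M+1) s) := rfl
    rw [h2, h1, hT]
  -- the top-level fsum as a double sum
  have hW : (∑ r ∈ Finset.range (M+2), c r * t ^ r) = A * T + V := by
    rw [Finset.sum_range_succ, hV, hA, hT]; ring
  have hTT : t ^ (M + 2) = t * T := by rw [hT, pow_succ]; ring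
  have hcong2 : ∀ s1 s2 : ℕ → ℕ, (∀ r < M + 2, s1 r = s2 r) →
      (fun sf => if (∑ r ∈ Finset.range (M + 2), sf r * t ^ r) ≤
          ∑ r ∈ Finset.range (M + 2), c r * t ^ r
        then chainTerm (dmod d N) t i (M+1) sf else 0) s1
      = (fun sf => if (∑ r ∈ Finset.range (M + 2), sf r * t ^ r) ≤
          ∑ r ∈ Finset.range (M + 2), c r * t ^ r
        then chainTerm (dmod d N) t i (M+1) sf else 0) s2 := by
    intro s1 s2 hss
    have e : (∑ r ∈ Finset.range (M+2), s1 r * t ^ r)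
        = ∑ r ∈ Finset.range (M+2), s2 r * t ^ r :=
      Finset.sum_congr rfl fun r hr => by rw [hss r (Finset.mem_range.mp hr)]
    have e2 : chainTerm (dmod d N) t i (M+1) s1 = chainTerm (dmod d N) t i (M+1) s2 :=
      chainTerm_congr (dmod d N) t i (M+1) (fun r hr => hss r (by omega))
    simp only [e, e2]
  have hfs : fsum (dmod d N) t i (M+1) c
      = ∑ x ∈ Finset.range t, ∑ y ∈ Finset.range T,
          (if x * T + y ≤ A * T + V
            then chainTerm (dmod d N) t i (M+1) (digit t (x * T + y)) else 0) := by
    have h1 := sum_ext (t := t) ht0 (M + 2)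
      (fun sf => if (∑ r ∈ Finset.range (M + 2), sf r * t ^ r) ≤
          ∑ r ∈ Finset.range (M + 2), c r * t ^ r
        then chainTerm (dmod d N) t i (M+1) sf else 0) hcong2
    have h2 : fsum (dmod d N) t i (M+1) c
        = ∑ s : Fin (M+2) → Fin t,
            (fun sf => if (∑ r ∈ Finset.range (M + 2), sf r * t ^ r) ≤
                ∑ r ∈ Finset.range (M + 2), c r * t ^ r
              then chainTerm (dmod d N) t i (M+1) sf else 0) (extF (M+2) s) := rfl
    rw [h2, h1, hTT, sum_range_mul]
    refine Finset.sum_congr rfl fun x hx => Finset.sum_congr rfl fun y hy => ?_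
    have hxt := Finset.mem_range.mp hx
    have hyT := Finset.mem_range.mp hy
    have hxy : x * T + y < t ^ (M+2) := by
      rw [hTT]
      calc x * T + y < x * T + T := by omega
        _ = (x + 1) * T := by ring
        _ ≤ t * T := Nat.mul_le_mul_right _ (by omega)
    rw [sum_digit_mod t _ (M+2), Nat.mod_eq_of_lt hxy, hW]
  -- splitting a single chain term
  have hsplitxy : ∀ x, x < t → ∀ y, y < T →
      chainTerm (dmod d N) t i (M+1) (digit t (x * T + y))
        = dmod d N i (i * t + x)
          + chainTerm (dmod d N) t ((i * t + x) % N) M (digit t y) := by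
    intro x hx y hy
    rw [chain_split d N t i M (digit t (x * T + y))]
    have hdt : digit t (x * T + y) (M+1) = x := by
      rw [hT] at hy ⊢
      exact digit_top ht0 hx hy
    rw [hdt]
    congr 1
    refine chainTerm_congr (dmod d N) t _ M (fun r hr => ?_)
    rw [hT]
    exact digit_lower ht0 (show r < M + 1 by omega) x y
  rw [hfs, ← Finset.sum_range_add_sum_Ico _ (show A + 1 ≤ t from hAt), Finset.sum_range_succ]
  -- the part with x > A vanishes
  have hIco : ∑ x ∈ Finset.Ico (A+1) t, ∑ y ∈ Finset.range T,
      (if x * T + y ≤ A * T + V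
        then chainTerm (dmod d N) t i (M+1) (digit t (x * T + y)) else 0) = 0 := by
    refine Finset.sum_eq_zero fun x hx => Finset.sum_eq_zero fun y hy => ?_
    have hxA := (Finset.mem_Ico.mp hx).1
    have hlt : ¬ (x * T + y ≤ A * T + V) := by
      have h1 : (A + 1) * T ≤ x * T := Nat.mul_le_mul_right _ hxA
      have h2 : A * T + T = (A + 1) * T := by ring
      omega
    rw [if_neg hlt]
  -- the part with x < A
  have hlow : ∀ x ∈ Finset.range A, ∑ y ∈ Finset.range T,
      (if x * T + y ≤ A * T + V
        then chainTerm (dmod d N) t i (M+1) (digit t (x * T + y)) else 0)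
      = (T : ℝ) * dmod d N i (i * t + x) + gsum (dmod d N) t ((i * t + x) % N) M := by
    intro x hx
    have hxA := Finset.mem_range.mp hx
    have hterm : ∀ y ∈ Finset.range T,
        (if x * T + y ≤ A * T + V
          then chainTerm (dmod d N) t i (M+1) (digit t (x * T + y)) else 0)
        = dmod d N i (i * t + x)
          + chainTerm (dmod d N) t ((i * t + x) % N) M (digit t y) := by
      intro y hy
      have hyT := Finset.mem_range.mp hy
      have hcond : x * T + y ≤ A * T + V := by
        have h1 : (x + 1) * T ≤ A * T := Nat.mul_le_mul_right _ (by omega)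
        have h2 : x * T + T = (x + 1) * T := by ring
        omega
      rw [if_pos hcond, hsplitxy x (by omega) y hyT]
    rw [Finset.sum_congr rfl hterm, Finset.sum_add_distrib, Finset.sum_const,
      Finset.card_range, nsmul_eq_mul, ← hg ((i * t + x) % N)]
  -- the part with x = A
  have hmid : ∑ y ∈ Finset.range T,
      (if A * T + y ≤ A * T + V
        then chainTerm (dmod d N) t i (M+1) (digit t (A * T + y)) else 0)
      = ((V + 1 : ℕ) : ℝ) * dmod d N i (i * t + A)
        + fsum (dmod d N) t ((i * t + A) % N) M c := by
    have hterm : ∀ y ∈ Finset.range T,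
        (if A * T + y ≤ A * T + V
          then chainTerm (dmod d N) t i (M+1) (digit t (A * T + y)) else 0)
        = (if y ≤ V then dmod d N i (i * t + A) else 0)
          + (if y ≤ V then chainTerm (dmod d N) t ((i * t + A) % N) M (digit t y) else 0) := by
      intro y hy
      have hyT := Finset.mem_range.mp hy
      by_cases hyV : y ≤ V
      · rw [if_pos (show A * T + y ≤ A * T + V by omega), if_pos hyV, if_pos hyV,
          hsplitxy A hAt y hyT]
      · rw [if_neg (show ¬ (A * T + y ≤ A * T + V) by omega), if_neg hyV, if_neg hyV, add_zero]
    rw [Finset.sum_congr rfl hterm, Finset.sum_add_distrib, sum_ite_le T V hVT,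
      ← hf ((i * t + A) % N)]
  rw [Finset.sum_congr rfl hlow, hmid, hIco, add_zero, Finset.sum_add_distrib, ← Finset.mul_sum]
  have hTcast : (T : ℝ) = (t : ℝ) ^ (M + 1) := by rw [hT]; push_cast; ring
  rw [hTcast]
  push_cast
  ring
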